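/- arXiv:math/0501459 — 2 statements merged into one kernel-verified Lean document; each statement's English description precedes it below -/
import Mathlib

section
/- In a finite distributive lattice, for any pair of elements u ≤ v, the largest congruence 1 is the join of the three pairwise disjoint congruences Θ(0,u), Θ(u,v), Θ(v,1), and Θ(0,u) ∨ Θ(v,1) and Θ(u,v) are complements of each other in the congruence lattice. -/
/-- A lattice congruence on `L`: an equivalence relation compatible with `⊔` and `⊓`. -/
structure LatticeCongruence (L : Type*) [Lattice L] where
  r : L → L → Prop
  refl : ∀ x, r x x
  symm : ∀ {x y}, r x y → r y x
  trans : ∀ {x y z}, r x y → r y z → r x z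
  sup : ∀ {a b c d}, r a b → r c d → r (a ⊔ c) (b ⊔ d)
  inf : ∀ {a b c d}, r a b → r c d → r (a ⊓ c) (b ⊓ d)

namespace LatticeCongruence
variable {L : Type*} [Lattice L]

instance : PartialOrder (LatticeCongruence L) where
  le θ φ := ∀ x y, θ.r x y → φ.r x y
  le_refl θ := fun _ _ h => h
  le_trans θ φ ψ h1 h2 := fun x y h => h2 x y (h1 x y h)
  le_antisymm θ φ h1 h2 := by
    cases θ; cases φ
    simp only [LatticeCongruence.mk.injEq]
    funext x y
    exact propext ⟨h1 x y, h2 x y⟩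

instance : InfSet (LatticeCongruence L) where
  sInf S :=
  { r := fun x y => ∀ θ ∈ S, θ.r x y
    refl := fun x θ _ => θ.refl x
    symm := fun h θ hθ => θ.symm (h θ hθ)
    trans := fun h1 h2 θ hθ => θ.trans (h1 θ hθ) (h2 θ hθ)
    sup := fun h1 h2 θ hθ => θ.sup (h1 θ hθ) (h2 θ hθ)
    inf := fun h1 h2 θ hθ => θ.inf (h1 θ hθ) (h2 θ hθ) }

instance : CompleteLattice (LatticeCongruence L) :=
  completeLatticeOfInf _ (fun _ =>
    ⟨fun θ hθ _ _ h => h θ hθ, fun _ hφ _ _ h θ hθ => hφ hθ _ _ h⟩)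

end LatticeCongruence

/-- `theta a b` is the principal congruence generated by the pair `(a, b)`. -/
def theta {L : Type*} [Lattice L] (a b : L) : LatticeCongruence L :=
  sInf {θ : LatticeCongruence L | θ.r a b}

/-- `thetaPlus a b = Θ⁺(a,b) = Θ(a ⊓ b, a)`, the least congruence collapsing `a` below `b`. -/
def thetaPlus {L : Type*} [Lattice L] (a b : L) : LatticeCongruence L :=
  theta (a ⊓ b) a

section Aux

variable {L : Type*} [Lattice L]

lemma theta_r_self (a b : L) : (theta a b).r a b := fun _θ hθ => hθ

lemma theta_le {a b : L} {θ : LatticeCongruence L} (h : θ.r a b) : theta a b ≤ θ :=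
  sInf_le h

lemma bot_r_of_eq {x y : L} (h : x = y) : (⊥ : LatticeCongruence L).r x y :=
  h ▸ fun θ _ => θ.refl x

lemma le_r {θ φ : LatticeCongruence L} (h : θ ≤ φ) {x y : L} (hr : θ.r x y) : φ.r x y := by
  have h' : ∀ x y, θ.r x y → φ.r x y := h
  exact h' x y hr

lemma le_of_forall_r {θ φ : LatticeCongruence L} (h : ∀ x y, θ.r x y → φ.r x y) : θ ≤ φ := h

end Aux

section DistribAux

variable {L : Type*} [DistribLattice L]

/-- The concrete interval congruence for `a ≤ b`. -/
def icon (a b : L) : LatticeCongruence L where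
  r x y := x ⊓ a = y ⊓ a ∧ x ⊔ b = y ⊔ b
  refl _ := ⟨rfl, rfl⟩
  symm h := ⟨h.1.symm, h.2.symm⟩
  trans h1 h2 := ⟨h1.1.trans h2.1, h1.2.trans h2.2⟩
  sup {p q r s} h1 h2 := by
    have e1 : ∀ x y : L, (x ⊔ y) ⊓ a = x ⊓ a ⊔ y ⊓ a := fun x y => inf_sup_right x y a
    have e2 : ∀ x y : L, (x ⊔ y) ⊔ b = (x ⊔ b) ⊔ (y ⊔ b) := fun x y => by
      rw [sup_sup_sup_comm, sup_idem]
    exact ⟨by rw [e1, e1, h1.1, h2.1], by rw [e2, e2, h1.2, h2.2]⟩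
  inf {p q r s} h1 h2 := by
    have e1 : ∀ x y : L, (x ⊓ y) ⊓ a = (x ⊓ a) ⊓ (y ⊓ a) := fun x y => by
      rw [inf_inf_inf_comm, inf_idem]
    have e2 : ∀ x y : L, (x ⊓ y) ⊔ b = (x ⊔ b) ⊓ (y ⊔ b) := fun x y => sup_inf_right x y b
    exact ⟨by rw [e1, e1, h1.1, h2.1], by rw [e2, e2, h1.2, h2.2]⟩

lemma theta_r_of {a b x y : L} (h1 : x ⊓ a = y ⊓ a) (h2 : x ⊔ b = y ⊔ b) :
    (theta a b).r x y := by
  intro θ hθ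
  have h3 : θ.r (x ⊔ y ⊓ a) (x ⊔ y ⊓ b) := θ.sup (θ.refl x) (θ.inf (θ.refl y) hθ)
  have h4 : θ.r (y ⊔ x ⊓ a) (y ⊔ x ⊓ b) := θ.sup (θ.refl y) (θ.inf (θ.refl x) hθ)
  have e1 : x ⊔ y ⊓ a = x := by rw [← h1, sup_inf_self]
  have e2 : y ⊔ x ⊓ a = y := by rw [h1, sup_inf_self]
  have e3 : x ⊔ y ⊓ b = y ⊔ x ⊓ b := by
    rw [sup_inf_left, sup_inf_left, h2, sup_comm x y]
  rw [e1, e3] at h3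
  rw [e2] at h4
  exact θ.trans h3 (θ.symm h4)

lemma theta_r_iff {a b : L} (hab : a ≤ b) {x y : L} :
    (theta a b).r x y ↔ x ⊓ a = y ⊓ a ∧ x ⊔ b = y ⊔ b := by
  constructor
  · intro h
    exact h (icon a b) ⟨by rw [inf_idem, inf_eq_right.2 hab], by rw [sup_idem, sup_eq_right.2 hab]⟩
  · exact fun h => theta_r_of h.1 h.2

/-- The congruence `x ~ y ↔ (x ⊔ u) ⊓ v = (y ⊔ u) ⊓ v`, containing `Θ(⊥,u)` and `Θ(v,⊤)`. -/
def psi (u v : L) : LatticeCongruence L where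
  r x y := (x ⊔ u) ⊓ v = (y ⊔ u) ⊓ v
  refl _ := rfl
  symm h := h.symm
  trans h1 h2 := h1.trans h2
  sup {a b c d} h1 h2 := by
    have e : ∀ p q : L, (p ⊔ q ⊔ u) ⊓ v = (p ⊔ u) ⊓ v ⊔ (q ⊔ u) ⊓ v := fun p q => by
      rw [← inf_sup_right, sup_sup_sup_comm, sup_idem]
    show ((a ⊔ c) ⊔ u) ⊓ v = ((b ⊔ d) ⊔ u) ⊓ v
    rw [e, e, show (a ⊔ u) ⊓ v = (b ⊔ u) ⊓ v from h1, show (c ⊔ u) ⊓ v = (d ⊔ u) ⊓ v from h2]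
  inf {a b c d} h1 h2 := by
    have e : ∀ p q : L, (p ⊓ q ⊔ u) ⊓ v = ((p ⊔ u) ⊓ v) ⊓ ((q ⊔ u) ⊓ v) := fun p q => by
      rw [sup_inf_right, inf_inf_inf_comm, inf_idem]
    show ((a ⊓ c) ⊔ u) ⊓ v = ((b ⊓ d) ⊔ u) ⊓ v
    rw [e, e, show (a ⊔ u) ⊓ v = (b ⊔ u) ⊓ v from h1, show (c ⊔ u) ⊓ v = (d ⊔ u) ⊓ v from h2]

end DistribAux

/-- In a finite bounded distributive lattice, for `u ≤ v` the largest congruence is the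
join of the three pairwise disjoint congruences `Θ(⊥,u)`, `Θ(u,v)`, `Θ(v,⊤)`, and
`Θ(⊥,u) ⊔ Θ(v,⊤)` and `Θ(u,v)` are complements of each other in the congruence lattice. -/
theorem finite_distrib_three_interval_decomposition {D : Type*} [DistribLattice D]
    [BoundedOrder D] [Finite D] {u v : D} (huv : u ≤ v) :
    theta (⊥ : D) u ⊔ theta u v ⊔ theta v ⊤ = (⊤ : LatticeCongruence D) ∧
    theta (⊥ : D) u ⊓ theta u v = ⊥ ∧
    theta u v ⊓ theta v (⊤ : D) = ⊥ ∧
    theta (⊥ : D) u ⊓ theta v ⊤ = ⊥ ∧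
    IsCompl (theta (⊥ : D) u ⊔ theta v ⊤) (theta u v) := by
  set θ1 := theta (⊥ : D) u with hθ1
  set θ2 := theta u v with hθ2
  set θ3 := theta v (⊤ : D) with hθ3
  -- Part 1: the join of the three is ⊤.
  have htop : θ1 ⊔ θ2 ⊔ θ3 = (⊤ : LatticeCongruence D) := by
    set J := θ1 ⊔ θ2 ⊔ θ3 with hJ
    have hJ1 : θ1 ≤ J := le_trans le_sup_left le_sup_left
    have hJ2 : θ2 ≤ J := le_trans le_sup_right le_sup_left
    have hJ3 : θ3 ≤ J := le_sup_right
    have chain : ∀ x : D, J.r x ⊤ := by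
      intro x
      have ha : J.r x (x ⊔ u) := le_r hJ1 ((theta_r_iff bot_le).2
        ⟨by simp, by rw [sup_assoc, sup_idem]⟩)
      have hb : J.r (x ⊔ u) (x ⊔ v) := le_r hJ2 ((theta_r_iff huv).2
        ⟨by rw [inf_eq_right.2 le_sup_right, inf_eq_right.2 (le_trans huv le_sup_right)],
         by rw [sup_assoc, sup_eq_right.2 huv, sup_assoc, sup_idem]⟩)
      have hc : J.r (x ⊔ v) ⊤ := le_r hJ3 ((theta_r_iff le_top).2
        ⟨by rw [inf_eq_right.2 le_sup_right, top_inf_eq], by simp⟩)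
      exact J.trans (J.trans ha hb) hc
    exact top_le_iff.1 (le_of_forall_r fun x y _ => J.trans (chain x) (J.symm (chain y)))
  -- Part 2
  have h12 : θ1 ⊓ θ2 = (⊥ : LatticeCongruence D) := by
    apply le_bot_iff.1
    apply le_of_forall_r
    intro x y h
    have hx1 := (theta_r_iff bot_le).1 (le_r inf_le_left h)
    have hx2 := (theta_r_iff huv).1 (le_r inf_le_right h)
    exact bot_r_of_eq (eq_of_inf_eq_sup_eq hx2.1 hx1.2)
  -- Part 3
  have h23 : θ2 ⊓ θ3 = (⊥ : LatticeCongruence D) := by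
    apply le_bot_iff.1
    apply le_of_forall_r
    intro x y h
    have hx2 := (theta_r_iff huv).1 (le_r inf_le_left h)
    have hx3 := (theta_r_iff le_top).1 (le_r inf_le_right h)
    exact bot_r_of_eq (eq_of_inf_eq_sup_eq hx3.1 hx2.2)
  -- Part 4
  have h13 : θ1 ⊓ θ3 = (⊥ : LatticeCongruence D) := by
    apply le_bot_iff.1
    apply le_of_forall_r
    intro x y h
    have hx1 := (theta_r_iff bot_le).1 (le_r inf_le_left h)
    have hx3 := (theta_r_iff le_top).1 (le_r inf_le_right h)
    have hinf : x ⊓ u = y ⊓ u := by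
      calc x ⊓ u = x ⊓ v ⊓ u := by rw [inf_assoc, inf_eq_right.2 huv]
        _ = y ⊓ v ⊓ u := by rw [hx3.1]
        _ = y ⊓ u := by rw [inf_assoc, inf_eq_right.2 huv]
    exact bot_r_of_eq (eq_of_inf_eq_sup_eq hinf hx1.2)
  -- Part 5
  have hsup : (θ1 ⊔ θ3) ⊔ θ2 = (⊤ : LatticeCongruence D) := by
    rw [sup_right_comm]; exact htop
  have hmeet : (θ1 ⊔ θ3) ⊓ θ2 = (⊥ : LatticeCongruence D) := by
    have hle : θ1 ⊔ θ3 ≤ psi u v := by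
      apply sup_le
      · exact theta_le (show (psi u v).r ⊥ u by
          show (⊥ ⊔ u) ⊓ v = (u ⊔ u) ⊓ v; rw [bot_sup_eq, sup_idem])
      · exact theta_le (show (psi u v).r v ⊤ by
          show (v ⊔ u) ⊓ v = (⊤ ⊔ u) ⊓ v
          rw [sup_comm, sup_eq_right.2 huv, inf_idem, top_sup_eq, top_inf_eq])
    apply le_bot_iff.1
    apply le_of_forall_r
    intro x y h
    have hψ : (x ⊔ u) ⊓ v = (y ⊔ u) ⊓ v := le_r hle (le_r inf_le_left h)
    have hx2 := (theta_r_iff huv).1 (le_r inf_le_right h)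
    have hsv : (x ⊔ u) ⊔ v = (y ⊔ u) ⊔ v := by
      rw [sup_right_comm, hx2.2, sup_right_comm]
    have hxu : x ⊔ u = y ⊔ u := eq_of_inf_eq_sup_eq hψ hsv
    exact bot_r_of_eq (eq_of_inf_eq_sup_eq hx2.1 hxu)
  exact ⟨htop, h12, h23, h13, IsCompl.of_eq hmeet hsup⟩
end

section
/- In the diamond M_3 with the decoration x_0 = x_2 = 0, y_0 = p, x_1 = q, y_1 = 1, y_2 = r: the congruence Θ⁺(x_1 ∧ y_2, x_2) ∨ Θ⁺(y_2, x_2 ∨ y_1) is trivial, Θ⁺(x_0 ∧ y_1, x_1) ∨ Θ⁺(y_1, x_1 ∨ y_0) is trivial, but Θ⁺(x_0 ∧ y_2, x_2) ∨ Θ⁺(y_2, x_2 ∨ y_0) is nontrivial. -/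

lemma theta_self {L : Type*} [Lattice L] (a : L) : theta a a = (⊥ : LatticeCongruence L) :=
  le_antisymm (sInf_le ((⊥ : LatticeCongruence L).refl a)) bot_le

/-- The equality relation is a lattice congruence. -/
def eqCon (L : Type*) [Lattice L] : LatticeCongruence L where
  r := Eq
  refl _ := rfl
  symm h := h.symm
  trans h1 h2 := h1.trans h2
  sup h1 h2 := by rw [h1, h2]
  inf h1 h2 := by rw [h1, h2]

/-- In the diamond `M₃ = {z, p, q, r, o}` with the decoration `x₀ = x₂ = z`, `y₀ = p`,
`x₁ = q`, `y₁ = o`, `y₂ = r`: the congruences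
`Θ⁺(x₁ ⊓ y₂, x₂) ⊔ Θ⁺(y₂, x₂ ⊔ y₁)` and `Θ⁺(x₀ ⊓ y₁, x₁) ⊔ Θ⁺(y₁, x₁ ⊔ y₀)` are trivial,
but `Θ⁺(x₀ ⊓ y₂, x₂) ⊔ Θ⁺(y₂, x₂ ⊔ y₀)` is nontrivial. -/
theorem M3_decoration_congruences {M : Type*} [Lattice M] (z p q r o : M)
    (hcarrier : ∀ t : M, t = z ∨ t = p ∨ t = q ∨ t = r ∨ t = o)
    (hzp : z ≠ p) (hzq : z ≠ q) (hzr : z ≠ r) (hzo : z ≠ o)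
    (hpq : p ≠ q) (hpr : p ≠ r) (hpo : p ≠ o)
    (hqr : q ≠ r) (hqo : q ≠ o) (hro : r ≠ o)
    (hpq_sup : p ⊔ q = o) (hqr_sup : q ⊔ r = o) (hpr_sup : p ⊔ r = o)
    (hpq_inf : p ⊓ q = z) (hqr_inf : q ⊓ r = z) (hpr_inf : p ⊓ r = z) :
    thetaPlus (q ⊓ r) z ⊔ thetaPlus r (z ⊔ o) = (⊥ : LatticeCongruence M) ∧
    thetaPlus (z ⊓ o) q ⊔ thetaPlus o (q ⊔ p) = (⊥ : LatticeCongruence M) ∧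
    thetaPlus (z ⊓ r) z ⊔ thetaPlus r (z ⊔ p) ≠ (⊥ : LatticeCongruence M) := by
  have hzlep : z ≤ p := hpq_inf ▸ inf_le_left
  have hzleq : z ≤ q := hpq_inf ▸ inf_le_right
  have hrleo : r ≤ o := hqr_sup ▸ le_sup_right
  have hzleo : z ≤ o := hzlep.trans (hpq_sup ▸ le_sup_left)
  have hzo : z ⊔ o = o := sup_eq_right.mpr hzleo
  have hro2 : r ⊓ o = r := inf_eq_left.mpr hrleo
  have hzp2 : z ⊔ p = p := sup_eq_right.mpr hzlep
  refine ⟨?_, ?_, ?_⟩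
  · have h1 : thetaPlus (q ⊓ r) z = (⊥ : LatticeCongruence M) := by
      simp only [thetaPlus, hqr_inf, inf_idem, theta_self]
    have h2 : thetaPlus r (z ⊔ o) = (⊥ : LatticeCongruence M) := by
      simp only [thetaPlus, hzo, hro2, theta_self]
    rw [h1, h2, sup_idem]
  · have h1 : thetaPlus (z ⊓ o) q = (⊥ : LatticeCongruence M) := by
      have : z ⊓ o = z := inf_eq_left.mpr hzleo
      simp only [thetaPlus, this]
      rw [inf_eq_left.mpr hzleq, theta_self]
    have h2 : thetaPlus o (q ⊔ p) = (⊥ : LatticeCongruence M) := by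
      have : q ⊔ p = o := by rw [sup_comm, hpq_sup]
      simp only [thetaPlus, this, inf_idem, theta_self]
    rw [h1, h2, sup_idem]
  · intro h
    have hle : thetaPlus r (z ⊔ p) ≤ (⊥ : LatticeCongruence M) := h ▸ le_sup_right
    have heq : thetaPlus r (z ⊔ p) = theta z r := by
      rw [thetaPlus, hzp2, inf_comm, hpr_inf]
    rw [heq] at hle
    have hzr' : (theta z r).r z r := fun θ hθ => hθ
    exact hzr ((hle z r hzr') (eqCon M) trivial)
end
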